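/- Each of the four birational maps w₀, w₁, w₂, w₃ is an involution wherever defined: for all complex (a₀,a₁,a₂,a₃;t;q,p), (i) if p+t ≠ 0 then w₀(w₀(a₀,a₁,a₂,a₃;t;q,p)) = (a₀,a₁,a₂,a₃;t;q,p); (ii) if q ≠ 0 then w₁∘w₁ is the identity at this point; (iii) if p ≠ 0 then w₂∘w₂ is the identity at this point; (iv) if q ≠ 1 then w₃∘w₃ is the identity at this point. -/

import Mathlib

/-- A point of the family of `D₅⁽¹⁾` Sakai surfaces: root variables `(a₀,a₁,a₂,a₃)`, the
independent parameter `t`, and the coordinates `(q,p)`. -/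
structure PV where
  a0 : ℂ
  a1 : ℂ
  a2 : ℂ
  a3 : ℂ
  t : ℂ
  q : ℂ
  p : ℂ

/-- The Bäcklund transformation `w₀`, the reflection in the symmetry root `α₀`. -/
noncomputable def w0 (s : PV) : PV :=
  ⟨-s.a0, s.a0 + s.a1, s.a2, s.a0 + s.a3, s.t, s.q + s.a0 / (s.p + s.t), s.p⟩

/-- The Bäcklund transformation `w₁`, the reflection in the symmetry root `α₁`. -/
noncomputable def w1 (s : PV) : PV :=
  ⟨s.a0 + s.a1, -s.a1, s.a1 + s.a2, s.a3, s.t, s.q, s.p - s.a1 / s.q⟩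

/-- The Bäcklund transformation `w₂`, the reflection in the symmetry root `α₂`. -/
noncomputable def w2 (s : PV) : PV :=
  ⟨s.a0, s.a1 + s.a2, -s.a2, s.a2 + s.a3, s.t, s.q + s.a2 / s.p, s.p⟩

/-- The Bäcklund transformation `w₃`, the reflection in the symmetry root `α₃`. -/
noncomputable def w3 (s : PV) : PV :=
  ⟨s.a0 + s.a3, s.a1, s.a2 + s.a3, -s.a3, s.t, s.q, s.p - s.a3 / (s.q - 1)⟩

/-- The Dynkin diagram automorphism `σ₁ = (α₀α₃)(α₁α₂)`. -/
noncomputable def sigma1 (s : PV) : PV :=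
  ⟨s.a3, s.a2, s.a1, s.a0, -s.t, -s.p / s.t, s.q * s.t⟩

/-- The Dynkin diagram automorphism `σ₂ = (α₀α₂)`. -/
def sigma2 (s : PV) : PV :=
  ⟨s.a2, s.a1, s.a0, s.a3, -s.t, s.q, s.p + s.t⟩

/-- The Dynkin diagram automorphism `σ₃ = (α₁α₃)`. -/
def sigma3 (s : PV) : PV :=
  ⟨s.a0, s.a3, s.a2, s.a1, -s.t, 1 - s.q, -s.p⟩

/-- The denominator-nonvanishing condition for `w₀` at `s`: `p + t ≠ 0`. -/
def Def0 (s : PV) : Prop := s.p + s.t ≠ 0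

/-- The denominator-nonvanishing condition for `w₁` at `s`: `q ≠ 0`. -/
def Def1 (s : PV) : Prop := s.q ≠ 0

/-- The denominator-nonvanishing condition for `w₂` at `s`: `p ≠ 0`. -/
def Def2 (s : PV) : Prop := s.p ≠ 0

/-- The denominator-nonvanishing condition for `w₃` at `s`: `q − 1 ≠ 0`. -/
def Def3 (s : PV) : Prop := s.q - 1 ≠ 0

/-- The denominator-nonvanishing condition for `σ₁` at `s`: `t ≠ 0`. -/
def DefS1 (s : PV) : Prop := s.t ≠ 0

/-- Each of the birational maps `w₀, w₁, w₂, w₃` is an involution wherever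
defined. -/
theorem w_involutions (s : PV) :
    (s.p + s.t ≠ 0 → w0 (w0 s) = s) ∧
    (s.q ≠ 0 → w1 (w1 s) = s) ∧
    (s.p ≠ 0 → w2 (w2 s) = s) ∧
    (s.q ≠ 1 → w3 (w3 s) = s) := by
  obtain ⟨a0,a1,a2,a3,t,q,p⟩ := s
  refine ⟨fun h => ?_, fun h => ?_, fun h => ?_, fun h => ?_⟩ <;>
    [skip; skip; skip; replace h : q - 1 ≠ 0 := sub_ne_zero.mpr h] <;>
    simp only [w0, w1, w2, w3, PV.mk.injEq] <;>
    refine ⟨?_, ?_, ?_, ?_, ?_, ?_, ?_⟩ <;>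
    first
      | rfl
      | trivial
      | ring
      | (field_simp; try ring)
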